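/- Let K = ℝ or K = ℂ and let A₁,…,A_k be symmetric matrices in Mₙ(K). If the Aᵢ are simultaneously diagonalizable, then there exists an orthogonal matrix P over K (PᵀP = Id) such that all matrices PᵀAᵢP are diagonal. -/

import Mathlib

open Matrix

/-- Any sum of squares in an `RCLike` field has a square root. -/
private lemma sum_sq_exists_sqrt {K : Type*} [RCLike K] {ι : Type*} [Fintype ι]
    {c : K} (w : ι → K) (hc : c = ∑ t, w t ^ 2) : ∃ z : K, z ^ 2 = c := by
  rcases RCLike.I_mul_I_ax (K := K) with hI | hI
  · -- "real" case : `I = 0`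
    have hre : ∀ x : K, ((RCLike.re x : ℝ) : K) = x := by
      intro x
      conv_rhs => rw [← RCLike.re_add_im x]
      rw [hI, mul_zero, add_zero]
    have hrec : (0 : ℝ) ≤ RCLike.re c := by
      rw [hc, map_sum]
      refine Finset.sum_nonneg fun t _ => ?_
      have h1 : w t ^ 2 = ((RCLike.re (w t) ^ 2 : ℝ) : K) := by
        rw [RCLike.ofReal_pow, hre (w t)]
      rw [h1, RCLike.ofReal_re]
      positivity
    refine ⟨((Real.sqrt (RCLike.re c) : ℝ) : K), ?_⟩
    rw [← RCLike.ofReal_pow, Real.sq_sqrt hrec, hre]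
  · -- "complex" case : `I * I = -1`
    set a := RCLike.re c with ha
    set b := RCLike.im c with hb
    set r := Real.sqrt (a ^ 2 + b ^ 2) with hr
    have hr2 : r ^ 2 = a ^ 2 + b ^ 2 := Real.sq_sqrt (by positivity)
    have hra : |a| ≤ r := by
      rw [← Real.sqrt_sq_eq_abs]
      exact Real.sqrt_le_sqrt (by nlinarith [sq_nonneg b])
    rcases abs_le.mp hra with ⟨hra1, hra2⟩
    have h1 : (0 : ℝ) ≤ (r + a) / 2 := by linarith
    have h2 : (0 : ℝ) ≤ (r - a) / 2 := by linarith
    set x := Real.sqrt ((r + a) / 2) with hxdef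
    have hx2 : x ^ 2 = (r + a) / 2 := Real.sq_sqrt h1
    set y := Real.sqrt ((r - a) / 2) with hydef
    have hy2 : y ^ 2 = (r - a) / 2 := Real.sq_sqrt h2
    have hxy : x * y = |b| / 2 := by
      rw [hxdef, hydef, ← Real.sqrt_mul h1]
      have hb4 : (r + a) / 2 * ((r - a) / 2) = (|b| / 2) ^ 2 := by
        rw [div_pow, sq_abs]; nlinarith [hr2]
      rw [hb4, Real.sqrt_sq (by positivity)]
    have key : ∀ s : ℝ, s ^ 2 = y ^ 2 → 2 * (x * s) = b →
        ((x : K) + (s : K) * RCLike.I) ^ 2 = c := by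
      intro s hs2 hxs
      have expand : ((x : K) + (s : K) * RCLike.I) ^ 2
          = ((x ^ 2 - s ^ 2 : ℝ) : K) + ((2 * (x * s) : ℝ) : K) * RCLike.I := by
        push_cast
        linear_combination ((s : K)) ^ 2 * hI
      rw [expand, hxs, hs2]
      have hxy2 : x ^ 2 - y ^ 2 = a := by rw [hx2, hy2]; ring
      rw [hxy2, ha, hb]
      exact RCLike.re_add_im c
    by_cases hbs : 0 ≤ b
    · exact ⟨_, key y rfl (by rw [hxy, abs_of_nonneg hbs]; ring)⟩
    · refine ⟨_, key (-y) (by ring) ?_⟩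
      have h3 : x * y = -b / 2 := by rw [hxy, abs_of_neg (not_le.mp hbs)]
      rw [show x * (-y) = -(x * y) by ring, h3]
      ring

/-- A Gram-type matrix `N = Xᵀ * X` over an `RCLike` field can be written `Yᵀ * Y`
with `Y` square. -/
private lemma exists_factor {K : Type*} [RCLike K] {d m : Type*} [Fintype d] [DecidableEq d]
    [Fintype m] (N : Matrix d d K) (X : Matrix m d K) (hX : N = Xᵀ * X) :
    ∃ Y : Matrix d d K, Yᵀ * Y = N := by
  classical
  have hsymm : Nᵀ = N := by rw [hX, transpose_mul, transpose_transpose]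
  have hN : ∀ i j, N j i = N i j := fun i j =>
    (congrFun (congrFun hsymm i) j).symm.trans (Matrix.transpose_apply N i j) |>.symm
  letI : Invertible (2 : K) := invertibleOfNonzero two_ne_zero
  have hB : LinearMap.IsSymm (Matrix.toBilin' N) := by
    rw [LinearMap.isSymm_def]
    intro p q
    rw [RingHom.id_apply, Matrix.toBilin'_apply, Matrix.toBilin'_apply, Finset.sum_comm]
    refine Finset.sum_congr rfl fun i _ => Finset.sum_congr rfl fun j _ => ?_
    rw [hN j i]; ring
  obtain ⟨v, hv⟩ := LinearMap.BilinForm.exists_orthogonal_basis hB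
  have hcard : Module.finrank K (d → K) = Fintype.card d :=
    Module.finrank_fintype_fun_eq_card K
  let eidx := (finCongr hcard).trans (Fintype.equivFin d).symm
  let u : Module.Basis d K (d → K) := v.reindex eidx
  have hu : ∀ a b : d, a ≠ b → Matrix.toBilin' N (u a) (u b) = 0 := by
    intro a b hab
    rw [show u a = v (eidx.symm a) from Module.Basis.reindex_apply v eidx a,
      show u b = v (eidx.symm b) from Module.Basis.reindex_apply v eidx b]
    exact hv fun h => hab (eidx.symm.injective h)
  let E : Matrix d d K := Matrix.of fun p b => u b p
  have hEdet : IsUnit E.det := by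
    have hE : E = (Pi.basisFun K d).toMatrix u := by
      ext p b
      rw [Module.Basis.toMatrix_apply]
      simp [E]
    rw [hE]
    letI := (Pi.basisFun K d).invertibleToMatrix u
    exact (Matrix.isUnit_iff_isUnit_det _).mp (isUnit_of_invertible _)
  set c : d → K := fun p => Matrix.toBilin' N (u p) (u p) with hcdef
  have hGram : Eᵀ * N * E = Matrix.diagonal c := by
    ext p q
    have hentry : (Eᵀ * N * E) p q = Matrix.toBilin' N (u p) (u q) := by
      rw [Matrix.toBilin'_apply]
      simp only [Matrix.mul_apply, Matrix.transpose_apply, Matrix.of_apply, E]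
      simp only [Finset.sum_mul]
      exact Finset.sum_comm
    rcases eq_or_ne p q with rfl | hpq
    · rw [hentry, Matrix.diagonal_apply_eq]
    · rw [hentry, Matrix.diagonal_apply_ne _ hpq]
      exact hu p q hpq
  have hsum : ∀ p, c p = ∑ t, (X *ᵥ u p) t ^ 2 := by
    intro p
    show Matrix.toBilin' N (u p) (u p) = _
    rw [Matrix.toBilin'_apply', hX, ← Matrix.mulVec_mulVec, Matrix.dotProduct_mulVec,
      Matrix.vecMul_transpose]
    simp [dotProduct, sq]
  choose z hz2 using fun p => sum_sq_exists_sqrt (X *ᵥ u p) (hsum p)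
  refine ⟨Matrix.diagonal z * E⁻¹, ?_⟩
  have hEinv : E * E⁻¹ = 1 := Matrix.mul_nonsing_inv E hEdet
  have ht : (E⁻¹)ᵀ * Eᵀ = 1 := by rw [← Matrix.transpose_mul, hEinv, Matrix.transpose_one]
  have hdd : Matrix.diagonal z * Matrix.diagonal z = Matrix.diagonal c := by
    have hzz : (fun i => z i * z i) = c := funext fun i => by rw [← hz2 i]; ring
    rw [Matrix.diagonal_mul_diagonal, hzz]
  calc (Matrix.diagonal z * E⁻¹)ᵀ * (Matrix.diagonal z * E⁻¹)
      = (E⁻¹)ᵀ * ((Matrix.diagonal z)ᵀ * (Matrix.diagonal z * E⁻¹)) := by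
        rw [Matrix.transpose_mul]; simp only [Matrix.mul_assoc]
    _ = (E⁻¹)ᵀ * ((Eᵀ * N * E) * E⁻¹) := by
        rw [Matrix.diagonal_transpose,
          show Matrix.diagonal z * (Matrix.diagonal z * E⁻¹)
              = Matrix.diagonal z * Matrix.diagonal z * E⁻¹ from (Matrix.mul_assoc _ _ _).symm,
          hdd, hGram]
    _ = ((E⁻¹)ᵀ * Eᵀ) * N * (E * E⁻¹) := by simp only [Matrix.mul_assoc]
    _ = N := by rw [ht, hEinv, Matrix.one_mul, Matrix.mul_one]

private lemma exists_pattern {K : Type*} [RCLike K] {n : ℕ} {S : Type*}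
    (Q : Matrix (Fin n) (Fin n) K) (hQ : IsUnit Q.det) (σ : Fin n → S)
    (hpat : ∀ j l : Fin n, σ j ≠ σ l → (Qᵀ * Q) j l = 0) :
    ∃ R : Matrix (Fin n) (Fin n) K, IsUnit R.det ∧ Rᵀ * R = Qᵀ * Q ∧
      ∀ j l : Fin n, σ j ≠ σ l → R j l = 0 := by
  classical
  set S₀ := Finset.image σ Finset.univ with hS₀
  set σ' : Fin n → S₀ := fun j => ⟨σ j, Finset.mem_image_of_mem σ (Finset.mem_univ j)⟩
    with hσ'
  set e : (Σ s : S₀, { j : Fin n // σ' j = s }) ≃ Fin n := Equiv.sigmaFiberEquiv σ' with he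
  set X : ∀ s : S₀, Matrix (Fin n) { j : Fin n // σ' j = s } K :=
    fun s => Matrix.of fun t a => Q t a.1 with hXdef
  set N : ∀ s : S₀, Matrix { j : Fin n // σ' j = s } { j : Fin n // σ' j = s } K :=
    fun s => (X s)ᵀ * X s with hNdef
  have happ : ∀ p, e p = p.2.1 := fun p => rfl
  have hsymmapp : ∀ j, e.symm j = ⟨σ' j, ⟨j, rfl⟩⟩ := fun j => rfl
  have hblock : (Qᵀ * Q).submatrix e e = Matrix.blockDiagonal' N := by
    ext p q
    obtain ⟨s, a⟩ := p
    obtain ⟨t, b⟩ := q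
    by_cases hst : s = t
    · subst hst
      rw [Matrix.blockDiagonal'_apply_eq]
      show (Qᵀ * Q) (e ⟨s, a⟩) (e ⟨s, b⟩) = ((X s)ᵀ * X s) a b
      rw [happ, happ]
      simp only [Matrix.mul_apply, Matrix.transpose_apply, hXdef, Matrix.of_apply]
    · rw [Matrix.blockDiagonal'_apply_ne _ _ _ hst]
      show (Qᵀ * Q) (e ⟨s, a⟩) (e ⟨t, b⟩) = 0
      rw [happ, happ]
      apply hpat
      have ha : σ a.1 = (s : S) := congrArg Subtype.val a.2
      have hb : σ b.1 = (t : S) := congrArg Subtype.val b.2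
      rw [ha, hb]
      exact fun h => hst (Subtype.coe_injective h)
  choose Y hYfac using fun s => exists_factor (N s) (X s) rfl
  set R := (Matrix.blockDiagonal' Y).submatrix e.symm e.symm with hRdef
  have hRt : Rᵀ = (Matrix.blockDiagonal' fun s => (Y s)ᵀ).submatrix e.symm e.symm := by
    rw [hRdef, Matrix.transpose_submatrix, Matrix.blockDiagonal'_transpose]
  have hRR : Rᵀ * R = Qᵀ * Q := by
    rw [hRt, hRdef, Matrix.submatrix_mul_equiv, ← Matrix.blockDiagonal'_mul]
    have hfun : (fun s => (Y s)ᵀ * Y s) = N := funext hYfac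
    rw [hfun, ← hblock, Matrix.submatrix_submatrix]
    simp [Matrix.submatrix_id_id]
  have hRdet : IsUnit R.det := by
    have h := congrArg Matrix.det hRR
    rw [Matrix.det_mul, Matrix.det_transpose] at h
    have h2 : IsUnit (R.det * R.det) := by
      rw [h, Matrix.det_mul, Matrix.det_transpose]; exact hQ.mul hQ
    exact isUnit_of_mul_isUnit_left h2
  refine ⟨R, hRdet, hRR, ?_⟩
  intro j l hjl
  rw [hRdef, Matrix.submatrix_apply, hsymmapp, hsymmapp]
  exact Matrix.blockDiagonal'_apply_ne _ _ _
    (fun h => hjl (congrArg Subtype.val (hσ' ▸ h)))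

/-- Over `K = ℝ` or `K = ℂ`, simultaneously diagonalizable symmetric matrices are
simultaneously diagonalizable by an orthogonal change of basis. -/
theorem simultaneously_orthogonally_diagonalizable
    {K : Type*} [RCLike K] {n k : ℕ}
    (A : Fin k → Matrix (Fin n) (Fin n) K)
    (hsym : ∀ i, (A i)ᵀ = A i)
    (hsd : ∃ Q : Matrix (Fin n) (Fin n) K, IsUnit Q.det ∧ ∀ i, (Q⁻¹ * A i * Q).IsDiag) :
    ∃ P : Matrix (Fin n) (Fin n) K, Pᵀ * P = 1 ∧ ∀ i, (Pᵀ * A i * P).IsDiag := by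
  classical
  obtain ⟨Q, hQ, hdiag⟩ := hsd
  have hQQ : Q * Q⁻¹ = 1 := Matrix.mul_nonsing_inv Q hQ
  set D : Fin k → Matrix (Fin n) (Fin n) K := fun i => Q⁻¹ * A i * Q with hDdef
  have hDdiag : ∀ i, (D i).IsDiag := hdiag
  have hAQ : ∀ i, A i * Q = Q * D i := by
    intro i
    calc A i * Q = (Q * Q⁻¹) * (A i * Q) := by rw [hQQ, Matrix.one_mul]
      _ = Q * D i := by rw [hDdef]; simp only [Matrix.mul_assoc]
  have hDt : ∀ i, (D i)ᵀ = D i := by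
    intro i
    ext j l
    rcases eq_or_ne j l with rfl | h
    · rw [Matrix.transpose_apply]
    · rw [Matrix.transpose_apply, hDdiag i h, hDdiag i (Ne.symm h)]
  have hQA : ∀ i, Qᵀ * A i = D i * Qᵀ := by
    intro i
    have h := congrArg Matrix.transpose (hAQ i)
    rwa [Matrix.transpose_mul, Matrix.transpose_mul, hsym i, hDt i] at h
  have hcomm : ∀ i, (Qᵀ * Q) * D i = D i * (Qᵀ * Q) := by
    intro i
    calc (Qᵀ * Q) * D i = Qᵀ * (Q * D i) := by simp only [Matrix.mul_assoc]
      _ = Qᵀ * (A i * Q) := by rw [hAQ i]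
      _ = (Qᵀ * A i) * Q := by simp only [Matrix.mul_assoc]
      _ = D i * (Qᵀ * Q) := by rw [hQA i]; simp only [Matrix.mul_assoc]
  set σ : Fin n → (Fin k → K) := fun j i => D i j j with hσ
  have hDd : ∀ i, D i = Matrix.diagonal fun u => D i u u := by
    intro i
    ext j l
    rcases eq_or_ne j l with rfl | h
    · rw [Matrix.diagonal_apply_eq]
    · rw [Matrix.diagonal_apply_ne _ h, hDdiag i h]
  have hpat : ∀ j l : Fin n, σ j ≠ σ l → (Qᵀ * Q) j l = 0 := by
    intro j l hjl
    have hex : ∃ i, D i j j ≠ D i l l := by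
      by_contra hcon
      push_neg at hcon
      exact hjl (funext hcon)
    obtain ⟨i, hi⟩ := hex
    have h1 := congrFun (congrFun (hcomm i) j) l
    rw [show (Qᵀ * Q) * D i = (Qᵀ * Q) * Matrix.diagonal fun u => D i u u by rw [← hDd i],
      show D i * (Qᵀ * Q) = (Matrix.diagonal fun u => D i u u) * (Qᵀ * Q) by rw [← hDd i]]
      at h1
    rw [Matrix.mul_diagonal, Matrix.diagonal_mul] at h1
    have h2 : (Qᵀ * Q) j l * (D i l l - D i j j) = 0 := by linear_combination h1
    rcases mul_eq_zero.mp h2 with h | h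
    · exact h
    · exact absurd (sub_eq_zero.mp h).symm hi
  obtain ⟨R, hRdet, hRR, hRpat⟩ := exists_pattern Q hQ σ hpat
  have hRR' : R * R⁻¹ = 1 := Matrix.mul_nonsing_inv R hRdet
  have ht : (R⁻¹)ᵀ * Rᵀ = 1 := by rw [← Matrix.transpose_mul, hRR', Matrix.transpose_one]
  have hRD : ∀ i, R * D i = D i * R := by
    intro i
    ext j l
    rw [show R * D i = R * Matrix.diagonal fun u => D i u u by rw [← hDd i],
      show D i * R = (Matrix.diagonal fun u => D i u u) * R by rw [← hDd i],
      Matrix.mul_diagonal, Matrix.diagonal_mul]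
    by_cases hjl : σ j = σ l
    · have h3 : D i j j = D i l l := congrFun hjl i
      rw [h3]; ring
    · rw [hRpat j l hjl, zero_mul, mul_zero]
  refine ⟨Q * R⁻¹, ?_, ?_⟩
  · calc (Q * R⁻¹)ᵀ * (Q * R⁻¹)
        = (R⁻¹)ᵀ * ((Qᵀ * Q) * R⁻¹) := by
          rw [Matrix.transpose_mul]; simp only [Matrix.mul_assoc]
      _ = (R⁻¹)ᵀ * ((Rᵀ * R) * R⁻¹) := by rw [hRR]
      _ = ((R⁻¹)ᵀ * Rᵀ) * (R * R⁻¹) := by simp only [Matrix.mul_assoc]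
      _ = 1 := by rw [ht, hRR', Matrix.one_mul]
  · intro i
    have hkey : (Q * R⁻¹)ᵀ * A i * (Q * R⁻¹) = D i := by
      calc (Q * R⁻¹)ᵀ * A i * (Q * R⁻¹)
          = (R⁻¹)ᵀ * (Qᵀ * (A i * Q)) * R⁻¹ := by
            rw [Matrix.transpose_mul]; simp only [Matrix.mul_assoc]
        _ = (R⁻¹)ᵀ * (Qᵀ * (Q * D i)) * R⁻¹ := by rw [hAQ i]
        _ = (R⁻¹)ᵀ * ((Qᵀ * Q) * D i) * R⁻¹ := by simp only [Matrix.mul_assoc]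
        _ = (R⁻¹)ᵀ * ((Rᵀ * R) * D i) * R⁻¹ := by rw [hRR]
        _ = ((R⁻¹)ᵀ * Rᵀ) * ((R * D i) * R⁻¹) := by simp only [Matrix.mul_assoc]
        _ = (R * D i) * R⁻¹ := by rw [ht, Matrix.one_mul]
        _ = D i * (R * R⁻¹) := by rw [hRD i]; simp only [Matrix.mul_assoc]
        _ = D i := by rw [hRR', Matrix.mul_one]
    rw [hkey]
    exact hDdiag i
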